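/- arXiv:2008.12105 — 3 statements merged into one kernel-verified Lean document; each statement's English description precedes it below -/
import Mathlib

section
/- Let n ≥ 2, let S = S^{n-1} ⊂ ℝⁿ be the unit sphere with surface measure σ, let e₁ ∈ S be the first standard basis vector, and let ℓ : ℝ → ℝ be continuous. Define ι₁ = ∫_S ℓ(‖v − e₁‖) (v · e₁) dσ(v). Then for every v̄ ∈ S, ∫_S ℓ(‖v̄ − v‖) v dσ(v) = ι₁ v̄ (as vectors in ℝⁿ); in particular each coordinate function v ↦ v_j is an eigenfunction of the turning operator T with eigenvalue ι₁. -/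
open MeasureTheory Metric RealInnerProductSpace

/-- `ℝⁿ` as a Euclidean space. -/
abbrev Eu (n : ℕ) := EuclideanSpace ℝ (Fin n)

/-- The unit sphere `S^{n-1} ⊂ ℝⁿ`. -/
abbrev Sph (n : ℕ) := Metric.sphere (0 : Eu n) 1

/-- The surface measure `σ` on the unit sphere `S^{n-1} ⊂ ℝⁿ`. -/
noncomputable def sphereMeasure (n : ℕ) : Measure (Sph n) :=
  (volume : Measure (Eu n)).toSphere

section Aux

open Set
open scoped Pointwise

variable {n : ℕ}

instance sphereMeasureFinite (n : ℕ) : IsFiniteMeasure (sphereMeasure n) := by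
  unfold sphereMeasure; infer_instance

lemma mem_sph_map (f : Eu n ≃ₗᵢ[ℝ] Eu n) (v : Sph n) : f (v : Eu n) ∈ Sph n := by
  rw [mem_sphere_zero_iff_norm, f.norm_map]
  exact mem_sphere_zero_iff_norm.mp v.2

/-- The homeomorphism of the unit sphere induced by a linear isometry equivalence. -/
noncomputable def sphMap (f : Eu n ≃ₗᵢ[ℝ] Eu n) : Sph n ≃ₜ Sph n where
  toFun v := ⟨f (v : Eu n), mem_sph_map f v⟩
  invFun v := ⟨f.symm (v : Eu n), mem_sph_map f.symm v⟩
  left_inv v := by ext; simp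
  right_inv v := by ext; simp
  continuous_toFun := Continuous.subtype_mk (f.continuous.comp continuous_subtype_val) _
  continuous_invFun := Continuous.subtype_mk (f.symm.continuous.comp continuous_subtype_val) _

lemma aux_set_eq (s : Set (Sph n)) (r : Ioi (0 : ℝ)) :
    (Subtype.val '' ((homeomorphUnitSphereProd (Eu n)) ⁻¹' (s ×ˢ Iio r)))
      = Ioo (0 : ℝ) (r : ℝ) • ((↑) '' s : Set (Eu n)) := by
  rw [← image2_smul, image2_image_right, ← Homeomorph.image_symm, image_image,
    ← image_subtype_val_Ioi_Iio, image2_image_left, image2_swap, ← image_prod]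
  rfl

lemma meas_smul {s : Set (Sph n)} (hs : MeasurableSet s) :
    MeasurableSet (Ioo (0 : ℝ) 1 • ((↑) '' s) : Set (Eu n)) := by
  have h := aux_set_eq s ⟨1, mem_Ioi.2 one_pos⟩
  rw [show ((⟨1, mem_Ioi.2 one_pos⟩ : Ioi (0:ℝ)) : ℝ) = 1 from rfl] at h
  rw [← h]
  exact (MeasurableEmbedding.subtype_coe
      ((measurableSet_singleton (0 : Eu n)).compl)).measurableSet_image.2
    ((homeomorphUnitSphereProd (Eu n)).measurable (hs.prod measurableSet_Iio))

lemma measurePreserving_sphMap (f : Eu n ≃ₗᵢ[ℝ] Eu n) :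
    MeasurePreserving (sphMap f) (sphereMeasure n) (sphereMeasure n) := by
  refine ⟨(sphMap f).continuous.measurable, ?_⟩
  ext s hs
  rw [Measure.map_apply (sphMap f).continuous.measurable hs]
  have hps : MeasurableSet ((sphMap f) ⁻¹' s) := (sphMap f).continuous.measurable hs
  unfold sphereMeasure
  rw [Measure.toSphere_apply' _ hps, Measure.toSphere_apply' _ hs]
  congr 1
  have h1 : ((↑) '' ((sphMap f) ⁻¹' s) : Set (Eu n)) = f ⁻¹' ((↑) '' s) := by
    ext x
    constructor
    · rintro ⟨v, hv, rfl⟩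
      exact ⟨sphMap f v, hv, rfl⟩
    · rintro ⟨w, hw, hwx⟩
      have hx : ‖x‖ = 1 := by
        have hw1 : ‖(w : Eu n)‖ = 1 := mem_sphere_zero_iff_norm.mp w.2
        have : ‖f x‖ = 1 := by rw [← hwx]; exact hw1
        rwa [f.norm_map] at this
      refine ⟨⟨x, mem_sphere_zero_iff_norm.mpr hx⟩, ?_, rfl⟩
      show sphMap f ⟨x, _⟩ ∈ s
      have : sphMap f ⟨x, mem_sphere_zero_iff_norm.mpr hx⟩ = w :=
        Subtype.ext hwx.symm
      rw [this]; exact hw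
  rw [h1]
  have h2 : Ioo (0 : ℝ) 1 • (f ⁻¹' ((↑) '' s)) = f ⁻¹' (Ioo (0 : ℝ) 1 • ((↑) '' s)) := by
    ext x
    simp only [Set.mem_smul, Set.mem_preimage]
    constructor
    · rintro ⟨c, hc, a, ha, rfl⟩
      exact ⟨c, hc, f a, ha, (_root_.map_smul f c a).symm⟩
    · rintro ⟨c, hc, b, hb, hcb⟩
      refine ⟨c, hc, f.symm b, by simp [hb], ?_⟩
      apply f.injective
      rw [_root_.map_smul, f.apply_symm_apply, hcb]
  rw [h2]
  exact (f.measurePreserving).measure_preimage (meas_smul hs).nullMeasurableSet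

lemma integral_comp_sphMap (f : Eu n ≃ₗᵢ[ℝ] Eu n) {E : Type*} [NormedAddCommGroup E]
    [NormedSpace ℝ E] (g : Sph n → E) :
    ∫ v, g (sphMap f v) ∂(sphereMeasure n) = ∫ v, g v ∂(sphereMeasure n) :=
  (measurePreserving_sphMap f).integral_comp (sphMap f).measurableEmbedding g

end Aux

/-- With `ι₁ = ∫_S ℓ(‖v − e₁‖) (v · e₁) dσ(v)`, for every `u ∈ S` one has
`∫_S ℓ(‖u − v‖) v dσ(v) = ι₁ u`: each coordinate function is an eigenfunction of the
turning operator with eigenvalue `ι₁`. -/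
theorem turning_operator_coordinate_eigenfunctions (n : ℕ) (hn : 2 ≤ n)
    (ℓ : ℝ → ℝ) (hℓ : Continuous ℓ)
    (e₁ : Eu n) (he₁ : e₁ = EuclideanSpace.single (⟨0, by omega⟩ : Fin n) 1)
    (ι₁ : ℝ)
    (hι₁ : ι₁ = ∫ v, ℓ ‖(v : Eu n) - e₁‖ * ⟪(v : Eu n), e₁⟫ ∂(sphereMeasure n)) :
    ∀ u : Sph n,
      ∫ v, ℓ ‖(u : Eu n) - (v : Eu n)‖ • (v : Eu n) ∂(sphereMeasure n)
        = ι₁ • (u : Eu n) := by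
  have hne₁ : ‖e₁‖ = 1 := by rw [he₁]; simp
  set j0 : Fin n := ⟨0, by omega⟩ with hj0
  -- integrability of the basic integrand
  have hcont : Continuous (fun v : Sph n => ℓ ‖e₁ - (v : Eu n)‖ • (v : Eu n)) :=
    (hℓ.comp ((continuous_const.sub continuous_subtype_val).norm)).smul continuous_subtype_val
  have hint : Integrable (fun v : Sph n => ℓ ‖e₁ - (v : Eu n)‖ • (v : Eu n)) (sphereMeasure n) := by
    rw [← integrableOn_univ]
    exact hcont.continuousOn.integrableOn_compact isCompact_univ
  -- the base integral
  set I : Eu n := ∫ v, ℓ ‖e₁ - (v : Eu n)‖ • (v : Eu n) ∂(sphereMeasure n) with hI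
  -- coordinates of I
  have hIcoord : ∀ j : Fin n,
      I j = ∫ v, ℓ ‖e₁ - (v : Eu n)‖ * (v : Eu n) j ∂(sphereMeasure n) := by
    intro j
    have := (EuclideanSpace.proj j (𝕜 := ℝ)).integral_comp_comm hint
    simpa using this.symm
  -- the key identity I = ι₁ • e₁
  have hIkey : I = ι₁ • e₁ := by
    ext j
    by_cases hj : j = j0
    · subst hj
      have h1 : (ι₁ • e₁) j0 = ι₁ := by
        rw [he₁]; simp [EuclideanSpace.single_apply]
      rw [hIcoord j0, h1, hι₁]
      congr 1
      funext v
      rw [norm_sub_rev, he₁, EuclideanSpace.inner_single_right]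
      simp
    · -- reflection negating the j-th coordinate
      set g : Eu n ≃ₗᵢ[ℝ] Eu n :=
        Submodule.reflection (ℝ ∙ (EuclideanSpace.single j (1 : ℝ)))ᗮ with hg
      have hsj : g (EuclideanSpace.single j (1 : ℝ)) = -(EuclideanSpace.single j (1 : ℝ)) :=
        Submodule.reflection_orthogonalComplement_singleton_eq_neg _
      have hge₁ : g e₁ = e₁ := by
        apply Submodule.reflection_mem_subspace_eq_self
        rw [Submodule.mem_orthogonal_singleton_iff_inner_right, he₁,
          EuclideanSpace.inner_single_left]
        simp [EuclideanSpace.single_apply, hj0]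
        intro h; exact hj (by exact h)
      have hgcoord : ∀ w : Eu n, (g w) j = -(w j) := by
        intro w
        have h1 : ((g w) j : ℝ) = ⟪g w, EuclideanSpace.single j (1 : ℝ)⟫ := by
          rw [EuclideanSpace.inner_single_right]; simp
        have h2 : g (-(EuclideanSpace.single j (1 : ℝ))) = EuclideanSpace.single j (1 : ℝ) := by
          rw [map_neg, hsj, neg_neg]
        rw [h1, ← h2, g.inner_map_map, inner_neg_right, EuclideanSpace.inner_single_right]
        simp
      have hA := integral_comp_sphMap g
        (fun v : Sph n => ℓ ‖e₁ - (v : Eu n)‖ * (v : Eu n) j)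
      have hA' : ∀ v : Sph n,
          ℓ ‖e₁ - ((sphMap g v : Sph n) : Eu n)‖ * ((sphMap g v : Sph n) : Eu n) j
            = -(ℓ ‖e₁ - (v : Eu n)‖ * (v : Eu n) j) := by
        intro v
        have hc : ((sphMap g v : Sph n) : Eu n) = g (v : Eu n) := rfl
        have hnrm : ‖e₁ - g (v : Eu n)‖ = ‖e₁ - (v : Eu n)‖ := by
          rw [show e₁ - g (v : Eu n) = g (e₁ - (v : Eu n)) by rw [map_sub, hge₁], g.norm_map]
        rw [hc, hgcoord, hnrm]
        ring
      rw [hIcoord j]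
      have : ∫ v, ℓ ‖e₁ - (v : Eu n)‖ * (v : Eu n) j ∂(sphereMeasure n)
          = -∫ v, ℓ ‖e₁ - (v : Eu n)‖ * (v : Eu n) j ∂(sphereMeasure n) := by
        conv_lhs => rw [← hA]
        simp_rw [hA']
        rw [integral_neg]
      have hz : ∫ v, ℓ ‖e₁ - (v : Eu n)‖ * (v : Eu n) j ∂(sphereMeasure n) = 0 := by
        linarith
      rw [hz, he₁]
      simp [EuclideanSpace.single_apply, hj]
  -- transport by a reflection sending e₁ to u
  intro u
  have hnu : ‖(u : Eu n)‖ = 1 := mem_sphere_zero_iff_norm.mp u.2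
  set f : Eu n ≃ₗᵢ[ℝ] Eu n := Submodule.reflection (ℝ ∙ (e₁ - (u : Eu n)))ᗮ with hf
  have hfe₁ : f e₁ = (u : Eu n) := Submodule.reflection_sub (by rw [hne₁, hnu])
  have step1 : ∫ v, ℓ ‖(u : Eu n) - (v : Eu n)‖ • (v : Eu n) ∂(sphereMeasure n)
      = ∫ v, ℓ ‖e₁ - (v : Eu n)‖ • (f (v : Eu n)) ∂(sphereMeasure n) := by
    rw [← integral_comp_sphMap f (fun v : Sph n => ℓ ‖(u : Eu n) - (v : Eu n)‖ • (v : Eu n))]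
    congr 1
    funext v
    have hc : ((sphMap f v : Sph n) : Eu n) = f v := rfl
    rw [hc, ← hfe₁, ← map_sub, f.norm_map]
  have step2 : ∫ v, ℓ ‖e₁ - (v : Eu n)‖ • (f (v : Eu n)) ∂(sphereMeasure n) = f I := by
    set L : Eu n →L[ℝ] Eu n := (f.toContinuousLinearEquiv : Eu n →L[ℝ] Eu n) with hL
    have := L.integral_comp_comm hint
    have hLf : ∀ x : Eu n, L x = f x := fun x => rfl
    simp only [_root_.map_smul] at this
    simpa [hLf] using this
  rw [step1, step2, hIkey, _root_.map_smul, hfe₁]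
end

section
/- Let n ≥ 2, let S = S^{n-1} ⊂ ℝⁿ be the unit sphere with surface measure σ, and let p, q : S → ℝ be integrable. With K(v) = ∫_S ∫_{V⁺(v,w)} ν·(v − w) [ p(v') q(w') − p(v) q(w) ] dσ(ν) dσ(w), where V⁺(v,w) = { ν ∈ S : ν·(v − w) > 0 }, v' = v − 2(v·ν)ν and w' = w − 2(w·ν)ν, the first velocity moment of K satisfies: ∫_S v K(v) dσ(v) = −2 ∫_S ∫_S ∫_{V⁺(v,w)} (v·ν) (ν·(v − w)) ν p(v) q(w) dσ(ν) dσ(w) dσ(v) (an identity between vectors in ℝⁿ). -/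
open MeasureTheory Metric RealInnerProductSpace

/-- The post-interaction velocity `v' = v − 2 (v·ν) ν` of `v ∈ S` for a normal `ν ∈ S`,
as a point of the sphere. -/
noncomputable def reflect {n : ℕ} (ν v : Sph n) : Sph n :=
  ⟨(v : Eu n) - (2 * ⟪(v : Eu n), (ν : Eu n)⟫) • (ν : Eu n), by
    rw [mem_sphere_zero_iff_norm]
    have hv : ‖(v : Eu n)‖ = 1 := mem_sphere_zero_iff_norm.mp v.2
    have hν : ‖(ν : Eu n)‖ = 1 := mem_sphere_zero_iff_norm.mp ν.2
    have h : ‖(v : Eu n) - (2 * ⟪(v : Eu n), (ν : Eu n)⟫) • (ν : Eu n)‖ ^ 2 = 1 := by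
      rw [norm_sub_sq_real, real_inner_smul_right, norm_smul, hv]
      simp [hν, mul_pow]
      ring
    nlinarith [norm_nonneg ((v : Eu n) - (2 * ⟪(v : Eu n), (ν : Eu n)⟫) • (ν : Eu n))]⟩

namespace ConsAux

open scoped Pointwise

instance (n : ℕ) : IsFiniteMeasure (sphereMeasure n) :=
  inferInstanceAs (IsFiniteMeasure ((volume : Measure (Eu n)).toSphere))

variable {n : ℕ}

lemma coe_reflect (ν v : Sph n) :
    ((reflect ν v : Sph n) : Eu n)
      = (v : Eu n) - (2 * ⟪(v : Eu n), (ν : Eu n)⟫) • (ν : Eu n) := rfl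

lemma inner_self_sph (ν : Sph n) : ⟪(ν : Eu n), (ν : Eu n)⟫ = 1 := by
  have hν : ‖(ν : Eu n)‖ = 1 := mem_sphere_zero_iff_norm.mp ν.2
  rw [real_inner_self_eq_norm_mul_norm, hν, mul_one]

/-- The sphere map induced by a linear isometry equivalence. -/
noncomputable def sphMap (e : Eu n ≃ₗᵢ[ℝ] Eu n) (v : Sph n) : Sph n :=
  ⟨e v, by
    rw [mem_sphere_zero_iff_norm, e.norm_map]
    exact mem_sphere_zero_iff_norm.mp v.2⟩

lemma continuous_sphMap (e : Eu n ≃ₗᵢ[ℝ] Eu n) : Continuous (sphMap e) :=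
  Continuous.subtype_mk (e.continuous.comp continuous_subtype_val) _

lemma measurePreserving_sphMap (e : Eu n ≃ₗᵢ[ℝ] Eu n) :
    MeasurePreserving (sphMap e) (sphereMeasure n) (sphereMeasure n) := by
  refine ⟨(continuous_sphMap e).measurable, ?_⟩
  refine Measure.ext fun s hs => ?_
  rw [Measure.map_apply (continuous_sphMap e).measurable hs]
  have hps : MeasurableSet (sphMap e ⁻¹' s) := (continuous_sphMap e).measurable hs
  rw [show sphereMeasure n = (volume : Measure (Eu n)).toSphere from rfl,
    Measure.toSphere_apply' _ hps, Measure.toSphere_apply' _ hs]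
  congr 1
  have h1 : ((↑) '' (sphMap e ⁻¹' s) : Set (Eu n)) = ⇑e ⁻¹' ((↑) '' s) := by
    ext x
    constructor
    · rintro ⟨v, hv, rfl⟩
      exact ⟨sphMap e v, hv, rfl⟩
    · rintro ⟨v, hv, hx⟩
      have hx1 : x ∈ Metric.sphere (0 : Eu n) 1 := by
        rw [mem_sphere_zero_iff_norm, ← e.norm_map x, ← hx]
        exact mem_sphere_zero_iff_norm.mp v.2
      refine ⟨⟨x, hx1⟩, ?_, rfl⟩
      have : sphMap e ⟨x, hx1⟩ = v := Subtype.ext hx.symm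
      rw [Set.mem_preimage, this]; exact hv
  rw [h1]
  have h2 : Set.Ioo (0:ℝ) 1 • (⇑e ⁻¹' ((↑) '' s))
      = ⇑e ⁻¹' (Set.Ioo (0:ℝ) 1 • ((↑) '' s)) := by
    ext x
    constructor
    · rintro ⟨r, hr, y, hy, rfl⟩
      exact ⟨r, hr, e y, hy, (e.map_smul r y).symm⟩
    · rintro ⟨r, hr, y, hy, hx⟩
      refine ⟨r, hr, e.symm y, by simpa using hy, ?_⟩
      apply e.injective
      rw [e.map_smul, e.apply_symm_apply]
      exact hx
  rw [h2]
  exact e.measurePreserving.measure_preimage_emb e.toMeasurableEquiv.measurableEmbedding _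

/-- Negation on the sphere. -/
noncomputable def negS (ν : Sph n) : Sph n := sphMap (LinearIsometryEquiv.neg ℝ) ν

lemma coe_negS (ν : Sph n) : ((negS ν : Sph n) : Eu n) = -(ν : Eu n) := rfl

/-- Reflection as a linear isometry equivalence. -/
noncomputable def reflE (ν : Sph n) : Eu n ≃ₗᵢ[ℝ] Eu n :=
  Submodule.reflection (ℝ ∙ ((ν : Eu n)))ᗮ

lemma reflE_apply (ν : Sph n) (x : Eu n) :
    reflE ν x = x - (2 * ⟪x, (ν : Eu n)⟫) • (ν : Eu n) := by
  have hν : ‖(ν : Eu n)‖ = 1 := mem_sphere_zero_iff_norm.mp ν.2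
  rw [reflE, Submodule.reflection_orthogonal_apply, Submodule.reflection_apply,
    Submodule.starProjection_unit_singleton ℝ hν, real_inner_comm]
  module

lemma reflect_eq_sphMap (ν : Sph n) : (reflect ν : Sph n → Sph n) = sphMap (reflE ν) :=
  funext fun v => Subtype.ext (by rw [coe_reflect]; exact (reflE_apply ν v).symm)

lemma measurePreserving_reflect (ν : Sph n) :
    MeasurePreserving (fun v => reflect ν v) (sphereMeasure n) (sphereMeasure n) := by
  rw [show (fun v => reflect ν v) = sphMap (reflE ν) from reflect_eq_sphMap ν]
  exact measurePreserving_sphMap _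

lemma measurePreserving_negS :
    MeasurePreserving (negS : Sph n → Sph n) (sphereMeasure n) (sphereMeasure n) :=
  measurePreserving_sphMap _

lemma reflect_reflect (ν v : Sph n) : reflect ν (reflect ν v) = v := by
  apply Subtype.ext
  rw [coe_reflect, coe_reflect, inner_sub_left, real_inner_smul_left, inner_self_sph]
  module

lemma reflect_negS (ν v : Sph n) : reflect (negS ν) v = reflect ν v := by
  apply Subtype.ext
  rw [coe_reflect, coe_reflect, coe_negS, inner_neg_right]
  module

lemma inner_reflect_sub (ν v w : Sph n) :
    ⟪(ν : Eu n), ((reflect ν v : Sph n) : Eu n) - ((reflect ν w : Sph n) : Eu n)⟫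
      = -⟪(ν : Eu n), (v : Eu n) - (w : Eu n)⟫ := by
  rw [coe_reflect, coe_reflect]
  simp only [inner_sub_right, real_inner_smul_right, inner_self_sph]
  rw [real_inner_comm (v : Eu n), real_inner_comm (w : Eu n)]
  ring

lemma continuous_reflect2 : Continuous fun z : Sph n × Sph n => reflect z.1 z.2 := by
  apply Continuous.subtype_mk
    (f := fun z : Sph n × Sph n =>
      ((z.2 : Sph n) : Eu n) - (2 * ⟪((z.2 : Sph n) : Eu n), ((z.1 : Sph n) : Eu n)⟫) • ((z.1 : Sph n) : Eu n))
  have h1 : Continuous fun z : Sph n × Sph n => ((z.1 : Sph n) : Eu n) :=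
    continuous_subtype_val.comp continuous_fst
  have h2 : Continuous fun z : Sph n × Sph n => ((z.2 : Sph n) : Eu n) :=
    continuous_subtype_val.comp continuous_snd
  exact h2.sub (((continuous_const.fun_mul (h2.inner h1))).fun_smul h1)

abbrev Z (n : ℕ) := Sph n × (Sph n × Sph n)

/-- the product measure `σ ⊗ σ ⊗ σ` -/
noncomputable def mu3 (n : ℕ) : Measure (Z n) :=
  (sphereMeasure n).prod ((sphereMeasure n).prod (sphereMeasure n))

instance (n : ℕ) : SFinite (mu3 n) := by unfold mu3; infer_instance
instance (n : ℕ) : IsFiniteMeasure (mu3 n) := by unfold mu3; infer_instance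

noncomputable def T0fun (z : Z n) : Z n := (z.1, (reflect z.1 z.2.1, reflect z.1 z.2.2))

lemma T0_involutive : Function.Involutive (T0fun (n := n)) := fun z => by
  show (z.1, (reflect z.1 (reflect z.1 z.2.1), reflect z.1 (reflect z.1 z.2.2))) = z
  rw [reflect_reflect, reflect_reflect]

lemma continuous_T0fun : Continuous (T0fun (n := n)) :=
  continuous_fst.prodMk
    ((continuous_reflect2.comp (continuous_fst.prodMk (continuous_fst.comp continuous_snd))).prodMk
      (continuous_reflect2.comp (continuous_fst.prodMk (continuous_snd.comp continuous_snd))))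

noncomputable def T0 (n : ℕ) : Z n ≃ᵐ Z n :=
  Homeomorph.toMeasurableEquiv
    { toEquiv := Function.Involutive.toPerm _ T0_involutive
      continuous_toFun := continuous_T0fun
      continuous_invFun := continuous_T0fun }

lemma coe_T0 : ⇑(T0 n) = T0fun := rfl

lemma measurePreserving_T0 : MeasurePreserving (⇑(T0 n)) (mu3 n) (mu3 n) := by
  rw [coe_T0]
  have hgm : Measurable (Function.uncurry
      (fun (ν : Sph n) (vw : Sph n × Sph n) => (reflect ν vw.1, reflect ν vw.2))) := by
    apply Continuous.measurable
    exact (continuous_reflect2.comp (continuous_fst.prodMk (continuous_fst.comp continuous_snd))).prodMk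
      (continuous_reflect2.comp (continuous_fst.prodMk (continuous_snd.comp continuous_snd)))
  have hg : ∀ᵐ ν ∂(sphereMeasure n),
      Measure.map (fun vw : Sph n × Sph n => (reflect ν vw.1, reflect ν vw.2))
        ((sphereMeasure n).prod (sphereMeasure n)) = (sphereMeasure n).prod (sphereMeasure n) := by
    refine Filter.Eventually.of_forall fun ν => ?_
    exact ((measurePreserving_reflect ν).prod (measurePreserving_reflect ν)).map_eq
  exact (MeasurePreserving.id (sphereMeasure n)).skew_product hgm hg

noncomputable def NE (n : ℕ) : Z n ≃ᵐ Z n :=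
  Homeomorph.toMeasurableEquiv
    { toEquiv := Function.Involutive.toPerm (fun z : Z n => (negS z.1, z.2))
        (fun z => by
          show (negS (negS z.1), z.2) = z
          have : negS (negS z.1) = z.1 := Subtype.ext (by rw [coe_negS, coe_negS, neg_neg])
          rw [this])
      continuous_toFun := ((continuous_sphMap _).comp continuous_fst).prodMk continuous_snd
      continuous_invFun := ((continuous_sphMap _).comp continuous_fst).prodMk continuous_snd }

lemma coe_NE : ⇑(NE n) = fun z : Z n => (negS z.1, z.2) := rfl

lemma measurePreserving_NE : MeasurePreserving (⇑(NE n)) (mu3 n) (mu3 n) := by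
  rw [coe_NE]
  exact measurePreserving_negS.prod (MeasurePreserving.id _)

/-- permutation `(v,(w,ν)) ↦ (ν,(v,w))` -/
noncomputable def CE (n : ℕ) : Z n ≃ᵐ Z n :=
  (MeasurableEquiv.prodAssoc).symm.trans MeasurableEquiv.prodComm

lemma CE_apply (y : Z n) : CE n y = (y.2.2, (y.1, y.2.1)) := by rfl

lemma measurePreserving_CE : MeasurePreserving (⇑(CE n)) (mu3 n) (mu3 n) := by
  have h1 : MeasurePreserving (⇑(MeasurableEquiv.prodAssoc (α := Sph n) (β := Sph n) (γ := Sph n)))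
      (((sphereMeasure n).prod (sphereMeasure n)).prod (sphereMeasure n)) (mu3 n) :=
    ⟨MeasurableEquiv.prodAssoc.measurable, Measure.prodAssoc_prod⟩
  have h2 := h1.symm MeasurableEquiv.prodAssoc
  have h3 : MeasurePreserving (Prod.swap)
      (((sphereMeasure n).prod (sphereMeasure n)).prod (sphereMeasure n)) (mu3 n) :=
    Measure.measurePreserving_swap
  have hc : ⇑(CE n) = Prod.swap ∘ ⇑(MeasurableEquiv.prodAssoc
      (α := Sph n) (β := Sph n) (γ := Sph n)).symm := rfl
  rw [hc]
  exact h3.comp h2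

/-- the transfer of a `mu3`-integral to an iterated integral in the order `(v, w, ν)` -/
lemma integral_mu3_eq_triple (F : Z n → Eu n) (hF : Integrable F (mu3 n)) :
    ∫ z, F z ∂(mu3 n)
      = ∫ v, ∫ w, ∫ ν, F (ν, (v, w))
          ∂(sphereMeasure n) ∂(sphereMeasure n) ∂(sphereMeasure n) := by
  have hC := measurePreserving_CE (n := n)
  have h1 : ∫ z, F z ∂(mu3 n) = ∫ y, F (CE n y) ∂(mu3 n) :=
    (hC.integral_comp (CE n).measurableEmbedding F).symm
  rw [h1]
  have hFC : Integrable (F ∘ ⇑(CE n)) (mu3 n) :=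
    (hC.integrable_comp_emb (CE n).measurableEmbedding).2 hF
  have hFC' : Integrable (fun y => F (CE n y))
      ((sphereMeasure n).prod ((sphereMeasure n).prod (sphereMeasure n))) := hFC
  rw [show (mu3 n) = (sphereMeasure n).prod ((sphereMeasure n).prod (sphereMeasure n)) from rfl,
    MeasureTheory.integral_prod _ hFC']
  refine integral_congr_ae ?_
  filter_upwards [hFC'.prod_right_ae] with v hv
  rw [MeasureTheory.integral_prod _ hv]
  simp only [CE_apply]

lemma measurable_setV (v w : Sph n) :
    MeasurableSet {ν : Sph n | 0 < ⟪(ν : Eu n), (v : Eu n) - (w : Eu n)⟫} := by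
  have hcont : Continuous fun ν : Sph n => ⟪(ν : Eu n), (v : Eu n) - (w : Eu n)⟫ :=
    continuous_subtype_val.inner continuous_const
  exact measurableSet_lt measurable_const hcont.measurable

/-- replacing the set integral over `{ν | 0 < ⟪ν, v-w⟫}` by a full integral with `max · 0` -/
lemma setIntegral_pos_part (v w : Sph n) (f : Sph n → Eu n) :
    ∫ ν in {ν : Sph n | 0 < ⟪(ν : Eu n), (v : Eu n) - (w : Eu n)⟫},
        ⟪(ν : Eu n), (v : Eu n) - (w : Eu n)⟫ • f ν ∂(sphereMeasure n)
      = ∫ ν, (max ⟪(ν : Eu n), (v : Eu n) - (w : Eu n)⟫ 0) • f ν ∂(sphereMeasure n) := by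
  rw [← integral_indicator (measurable_setV v w)]
  refine integral_congr_ae (Filter.Eventually.of_forall fun ν => ?_)
  by_cases h : 0 < ⟪(ν : Eu n), (v : Eu n) - (w : Eu n)⟫
  · simp only [Set.indicator_apply, Set.mem_setOf_eq, if_pos h, max_eq_left h.le]
  · simp only [Set.indicator_apply, Set.mem_setOf_eq, if_neg h, max_eq_right (not_lt.1 h),
      zero_smul]

noncomputable def Rz (z : Z n) : ℝ := ⟪(z.1 : Eu n), (z.2.1 : Eu n) - (z.2.2 : Eu n)⟫
noncomputable def mz (z : Z n) : ℝ := max (Rz z) 0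

lemma continuous_mz : Continuous (mz (n := n)) := by
  apply Continuous.max ?_ continuous_const
  exact (continuous_subtype_val.comp continuous_fst).inner
    ((continuous_subtype_val.comp (continuous_fst.comp continuous_snd)).sub
      (continuous_subtype_val.comp (continuous_snd.comp continuous_snd)))

lemma norm_coe_sph (v : Sph n) : ‖(v : Eu n)‖ = 1 := mem_sphere_zero_iff_norm.mp v.2

lemma abs_Rz_le (z : Z n) : |Rz z| ≤ 2 := by
  have h := abs_real_inner_le_norm (z.1 : Eu n) ((z.2.1 : Eu n) - (z.2.2 : Eu n))
  have hsub : ‖(z.2.1 : Eu n) - (z.2.2 : Eu n)‖ ≤ 2 := by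
    calc ‖(z.2.1 : Eu n) - (z.2.2 : Eu n)‖ ≤ ‖(z.2.1 : Eu n)‖ + ‖(z.2.2 : Eu n)‖ :=
          norm_sub_le _ _
      _ = 2 := by rw [norm_coe_sph, norm_coe_sph]; norm_num
  calc |Rz z| ≤ ‖(z.1 : Eu n)‖ * ‖(z.2.1 : Eu n) - (z.2.2 : Eu n)‖ := h
    _ ≤ 2 := by rw [norm_coe_sph, one_mul]; exact hsub

lemma abs_mz_le (z : Z n) : |mz z| ≤ 2 := by
  rw [mz, abs_of_nonneg (le_max_right _ _)]
  exact max_le (le_trans (le_abs_self _) (abs_Rz_le z)) (by norm_num)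

variable (p q : Sph n → ℝ)

noncomputable def Lf (z : Z n) : Eu n :=
  (mz z * (p z.2.1 * q z.2.2)) • (z.2.1 : Eu n)
noncomputable def Gf (z : Z n) : Eu n :=
  (mz z * (p (reflect z.1 z.2.1) * q (reflect z.1 z.2.2))) • (z.2.1 : Eu n)
noncomputable def G'f (z : Z n) : Eu n :=
  (mz z * (p z.2.1 * q z.2.2)) • ((reflect z.1 z.2.1 : Sph n) : Eu n)
noncomputable def Hf (z : Z n) : Eu n :=
  (⟪(z.2.1 : Eu n), (z.1 : Eu n)⟫ * mz z * (p z.2.1 * q z.2.2)) • (z.1 : Eu n)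

variable {p q}

lemma integrable_pq (hp : Integrable p (sphereMeasure n)) (hq : Integrable q (sphereMeasure n)) :
    Integrable (fun z : Z n => p z.2.1 * q z.2.2) (mu3 n) := by
  have h := (integrable_const (1:ℝ) (μ := sphereMeasure n)).mul_prod (hp.mul_prod hq)
  simpa [mu3] using h

lemma integrable_dom (hp : Integrable p (sphereMeasure n)) (hq : Integrable q (sphereMeasure n)) :
    Integrable (fun z : Z n => 2 * (|p z.2.1| * |q z.2.2|)) (mu3 n) :=
  (integrable_pq hp.abs hq.abs).const_mul 2

lemma aesm_pq (hp : Integrable p (sphereMeasure n)) (hq : Integrable q (sphereMeasure n)) :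
    AEStronglyMeasurable (fun z : Z n => p z.2.1 * q z.2.2) (mu3 n) :=
  (integrable_pq hp hq).1

lemma integrable_Lf (hp : Integrable p (sphereMeasure n)) (hq : Integrable q (sphereMeasure n)) :
    Integrable (Lf p q) (mu3 n) := by
  refine Integrable.mono' (integrable_dom hp hq) ?_ (Filter.Eventually.of_forall fun z => ?_)
  · exact (continuous_mz.aestronglyMeasurable.mul (aesm_pq hp hq)).smul
      (continuous_subtype_val.comp (continuous_fst.comp continuous_snd)).aestronglyMeasurable
  · rw [Lf, norm_smul, norm_coe_sph, mul_one, Real.norm_eq_abs, abs_mul, abs_mul]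
    have h1 := abs_mz_le z
    have h2 : (0:ℝ) ≤ |p z.2.1| := abs_nonneg _
    have h3 : (0:ℝ) ≤ |q z.2.2| := abs_nonneg _
    exact mul_le_mul_of_nonneg_right h1 (mul_nonneg h2 h3)

lemma integrable_G'f (hp : Integrable p (sphereMeasure n)) (hq : Integrable q (sphereMeasure n)) :
    Integrable (G'f p q) (mu3 n) := by
  refine Integrable.mono' (integrable_dom hp hq) ?_ (Filter.Eventually.of_forall fun z => ?_)
  · refine (continuous_mz.aestronglyMeasurable.mul (aesm_pq hp hq)).smul ?_
    exact (continuous_subtype_val.comp (continuous_reflect2.comp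
      (continuous_fst.prodMk (continuous_fst.comp continuous_snd)))).aestronglyMeasurable
  · rw [G'f, norm_smul, norm_coe_sph, mul_one, Real.norm_eq_abs, abs_mul, abs_mul]
    have h1 := abs_mz_le z
    have h2 : (0:ℝ) ≤ |p z.2.1| := abs_nonneg _
    have h3 : (0:ℝ) ≤ |q z.2.2| := abs_nonneg _
    exact mul_le_mul_of_nonneg_right h1 (mul_nonneg h2 h3)

lemma integrable_Hf (hp : Integrable p (sphereMeasure n)) (hq : Integrable q (sphereMeasure n)) :
    Integrable (Hf p q) (mu3 n) := by
  refine Integrable.mono' (integrable_dom hp hq) ?_ (Filter.Eventually.of_forall fun z => ?_)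
  · have hc : Continuous fun z : Z n => ⟪(z.2.1 : Eu n), (z.1 : Eu n)⟫ :=
      (continuous_subtype_val.comp (continuous_fst.comp continuous_snd)).inner
        (continuous_subtype_val.comp continuous_fst)
    exact ((hc.mul continuous_mz).aestronglyMeasurable.mul (aesm_pq hp hq)).smul
      (continuous_subtype_val.comp continuous_fst).aestronglyMeasurable
  · rw [Hf, norm_smul, norm_coe_sph, mul_one, Real.norm_eq_abs, abs_mul, abs_mul, abs_mul]
    have h1 := abs_mz_le z
    have h4 : |⟪(z.2.1 : Eu n), (z.1 : Eu n)⟫| ≤ 1 := by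
      have := abs_real_inner_le_norm (z.2.1 : Eu n) (z.1 : Eu n)
      rwa [norm_coe_sph, norm_coe_sph, mul_one] at this
    have h2 : (0:ℝ) ≤ |p z.2.1| := abs_nonneg _
    have h3 : (0:ℝ) ≤ |q z.2.2| := abs_nonneg _
    have h5 : |⟪(z.2.1 : Eu n), (z.1 : Eu n)⟫| * |mz z| ≤ 2 := by
      nlinarith [abs_nonneg (mz z), abs_nonneg (⟪(z.2.1 : Eu n), (z.1 : Eu n)⟫)]
    exact mul_le_mul_of_nonneg_right h5 (mul_nonneg h2 h3)

lemma null_preimage_reflect₁ {N : Set (Sph n)} (hN : MeasurableSet N)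
    (h0 : sphereMeasure n N = 0) :
    mu3 n {z : Z n | reflect z.1 z.2.1 ∈ N} = 0 := by
  have hmeas : MeasurableSet {z : Z n | reflect z.1 z.2.1 ∈ N} := by
    have hc : Continuous fun z : Z n => reflect z.1 z.2.1 :=
      continuous_reflect2.comp (continuous_fst.prodMk (continuous_fst.comp continuous_snd))
    exact hc.measurable hN
  rw [show (mu3 n) = (sphereMeasure n).prod ((sphereMeasure n).prod (sphereMeasure n)) from rfl,
    Measure.prod_apply hmeas]
  have hz : ∀ ν : Sph n,
      ((sphereMeasure n).prod (sphereMeasure n))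
        (Prod.mk ν ⁻¹' {z : Z n | reflect z.1 z.2.1 ∈ N}) = 0 := by
    intro ν
    have hsec : Prod.mk ν ⁻¹' {z : Z n | reflect z.1 z.2.1 ∈ N}
        = ((fun v => reflect ν v) ⁻¹' N) ×ˢ Set.univ := by
      ext vw; simp [Set.mem_prod]
    rw [hsec, Measure.prod_prod,
      (measurePreserving_reflect ν).measure_preimage hN.nullMeasurableSet, h0, zero_mul]
  simp only [hz, lintegral_zero]

lemma null_preimage_reflect₂ {N : Set (Sph n)} (hN : MeasurableSet N)
    (h0 : sphereMeasure n N = 0) :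
    mu3 n {z : Z n | reflect z.1 z.2.2 ∈ N} = 0 := by
  have hmeas : MeasurableSet {z : Z n | reflect z.1 z.2.2 ∈ N} := by
    have hc : Continuous fun z : Z n => reflect z.1 z.2.2 :=
      continuous_reflect2.comp (continuous_fst.prodMk (continuous_snd.comp continuous_snd))
    exact hc.measurable hN
  rw [show (mu3 n) = (sphereMeasure n).prod ((sphereMeasure n).prod (sphereMeasure n)) from rfl,
    Measure.prod_apply hmeas]
  have hz : ∀ ν : Sph n,
      ((sphereMeasure n).prod (sphereMeasure n))
        (Prod.mk ν ⁻¹' {z : Z n | reflect z.1 z.2.2 ∈ N}) = 0 := by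
    intro ν
    have hsec : Prod.mk ν ⁻¹' {z : Z n | reflect z.1 z.2.2 ∈ N}
        = Set.univ ×ˢ ((fun w => reflect ν w) ⁻¹' N) := by
      ext vw; simp [Set.mem_prod]
    rw [hsec, Measure.prod_prod,
      (measurePreserving_reflect ν).measure_preimage hN.nullMeasurableSet, h0, mul_zero]
  simp only [hz, lintegral_zero]

lemma aesm_reflect₁ {f : Sph n → ℝ} (hf : AEStronglyMeasurable f (sphereMeasure n)) :
    AEStronglyMeasurable (fun z : Z n => f (reflect z.1 z.2.1)) (mu3 n) := by
  obtain ⟨N, hsub, hNmeas, hNnull⟩ :=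
    exists_measurable_superset_of_null (ae_iff.mp hf.ae_eq_mk)
  have hΦ : Measurable fun z : Z n => reflect z.1 z.2.1 :=
    (continuous_reflect2.comp (continuous_fst.prodMk (continuous_fst.comp continuous_snd))).measurable
  have hnull := null_preimage_reflect₁ hNmeas hNnull
  have haeeq : (fun z : Z n => f (reflect z.1 z.2.1)) =ᵐ[mu3 n]
      fun z : Z n => hf.mk f (reflect z.1 z.2.1) := by
    refine ae_iff.mpr (measure_mono_null ?_ hnull)
    intro z hz
    exact hsub hz
  exact ((hf.stronglyMeasurable_mk.comp_measurable hΦ).aestronglyMeasurable).congr haeeq.symm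

lemma aesm_reflect₂ {f : Sph n → ℝ} (hf : AEStronglyMeasurable f (sphereMeasure n)) :
    AEStronglyMeasurable (fun z : Z n => f (reflect z.1 z.2.2)) (mu3 n) := by
  obtain ⟨N, hsub, hNmeas, hNnull⟩ :=
    exists_measurable_superset_of_null (ae_iff.mp hf.ae_eq_mk)
  have hΦ : Measurable fun z : Z n => reflect z.1 z.2.2 :=
    (continuous_reflect2.comp (continuous_fst.prodMk (continuous_snd.comp continuous_snd))).measurable
  have hnull := null_preimage_reflect₂ hNmeas hNnull
  have haeeq : (fun z : Z n => f (reflect z.1 z.2.2)) =ᵐ[mu3 n]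
      fun z : Z n => hf.mk f (reflect z.1 z.2.2) := by
    refine ae_iff.mpr (measure_mono_null ?_ hnull)
    intro z hz
    exact hsub hz
  exact ((hf.stronglyMeasurable_mk.comp_measurable hΦ).aestronglyMeasurable).congr haeeq.symm

lemma integrable_Gf (hp : Integrable p (sphereMeasure n)) (hq : Integrable q (sphereMeasure n)) :
    Integrable (Gf p q) (mu3 n) := by
  have hdom : Integrable
      (fun z : Z n => 2 * (|p (reflect z.1 z.2.1)| * |q (reflect z.1 z.2.2)|)) (mu3 n) := by
    have h := (measurePreserving_T0.integrable_comp_emb (T0 n).measurableEmbedding).2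
      (integrable_dom hp hq)
    exact h
  refine Integrable.mono' hdom ?_ (Filter.Eventually.of_forall fun z => ?_)
  · exact (continuous_mz.aestronglyMeasurable.mul
      ((aesm_reflect₁ hp.1).mul (aesm_reflect₂ hq.1))).smul
      (continuous_subtype_val.comp (continuous_fst.comp continuous_snd)).aestronglyMeasurable
  · rw [Gf, norm_smul, norm_coe_sph, mul_one, Real.norm_eq_abs, abs_mul, abs_mul]
    have h1 := abs_mz_le z
    have h2 : (0:ℝ) ≤ |p (reflect z.1 z.2.1)| := abs_nonneg _
    have h3 : (0:ℝ) ≤ |q (reflect z.1 z.2.2)| := abs_nonneg _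
    exact mul_le_mul_of_nonneg_right h1 (mul_nonneg h2 h3)

end ConsAux

open ConsAux in
/-- The first velocity moment of the conservative-interaction operator `K`:
`∫_S v K(v) dσ(v) = −2 ∫∫∫ (v·ν)(ν·(v−w)) ν p(v) q(w)`. -/
theorem conservative_interaction_first_moment (n : ℕ) (hn : 2 ≤ n)
    (p q : Sph n → ℝ) (hp : Integrable p (sphereMeasure n))
    (hq : Integrable q (sphereMeasure n))
    (K : Sph n → ℝ)
    (hK : ∀ v : Sph n, K v =
      ∫ w, (∫ ν in {ν : Sph n | 0 < ⟪(ν : Eu n), (v : Eu n) - (w : Eu n)⟫},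
        ⟪(ν : Eu n), (v : Eu n) - (w : Eu n)⟫ *
          (p (reflect ν v) * q (reflect ν w) - p v * q w)
        ∂(sphereMeasure n)) ∂(sphereMeasure n)) :
    ∫ v, K v • (v : Eu n) ∂(sphereMeasure n)
      = (-2 : ℝ) • ∫ v, (∫ w,
          (∫ ν in {ν : Sph n | 0 < ⟪(ν : Eu n), (v : Eu n) - (w : Eu n)⟫},
            (⟪(v : Eu n), (ν : Eu n)⟫ * ⟪(ν : Eu n), (v : Eu n) - (w : Eu n)⟫ *
              (p v * q w)) • (ν : Eu n)
          ∂(sphereMeasure n)) ∂(sphereMeasure n)) ∂(sphereMeasure n) := by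
  classical
  have hG := integrable_Gf hp hq
  have hL := integrable_Lf hp hq
  have hG' := integrable_G'f hp hq
  have hH := integrable_Hf hp hq
  -- Step 1: the left-hand side as an integral over the triple product
  have step1 : ∫ v, K v • (v : Eu n) ∂(sphereMeasure n)
      = ∫ z, (Gf p q z - Lf p q z) ∂(mu3 n) := by
    rw [integral_mu3_eq_triple (fun z => Gf p q z - Lf p q z) (hG.sub hL)]
    refine integral_congr_ae (Filter.Eventually.of_forall fun v => ?_)
    dsimp only
    rw [hK v, ← integral_smul_const]
    refine integral_congr_ae (Filter.Eventually.of_forall fun w => ?_)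
    dsimp only
    rw [← integral_smul_const]
    have hmul : (fun ν : Sph n => (⟪(ν : Eu n), (v : Eu n) - (w : Eu n)⟫ *
        (p (reflect ν v) * q (reflect ν w) - p v * q w)) • (v : Eu n))
        = fun ν : Sph n => ⟪(ν : Eu n), (v : Eu n) - (w : Eu n)⟫ •
            ((p (reflect ν v) * q (reflect ν w) - p v * q w) • (v : Eu n)) := by
      funext ν; rw [mul_smul]
    rw [show (∫ ν in {ν : Sph n | 0 < ⟪(ν : Eu n), (v : Eu n) - (w : Eu n)⟫},
        (⟪(ν : Eu n), (v : Eu n) - (w : Eu n)⟫ *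
          (p (reflect ν v) * q (reflect ν w) - p v * q w)) • (v : Eu n)
        ∂(sphereMeasure n))
      = ∫ ν in {ν : Sph n | 0 < ⟪(ν : Eu n), (v : Eu n) - (w : Eu n)⟫},
          ⟪(ν : Eu n), (v : Eu n) - (w : Eu n)⟫ •
            ((p (reflect ν v) * q (reflect ν w) - p v * q w) • (v : Eu n))
        ∂(sphereMeasure n) from by rw [hmul],
      setIntegral_pos_part v w]
    refine integral_congr_ae (Filter.Eventually.of_forall fun ν => ?_)
    dsimp only
    show (max ⟪(ν : Eu n), (v : Eu n) - (w : Eu n)⟫ 0) •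
        ((p (reflect ν v) * q (reflect ν w) - p v * q w) • (v : Eu n))
      = Gf p q (ν, (v, w)) - Lf p q (ν, (v, w))
    simp only [Gf, Lf, mz, Rz]
    module
  -- Step 2: change of variables in the gain term
  have hUmp : MeasurePreserving (⇑((NE n).trans (T0 n))) (mu3 n) (mu3 n) := by
    have : ⇑((NE n).trans (T0 n)) = ⇑(T0 n) ∘ ⇑(NE n) := rfl
    rw [this]
    exact measurePreserving_T0.comp measurePreserving_NE
  have step2 : ∫ z, Gf p q z ∂(mu3 n) = ∫ z, G'f p q z ∂(mu3 n) := by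
    rw [← hUmp.integral_comp ((NE n).trans (T0 n)).measurableEmbedding (Gf p q)]
    refine integral_congr_ae (Filter.Eventually.of_forall fun z => ?_)
    show Gf p q ((T0 n) ((NE n) z)) = G'f p q z
    simp only [coe_T0, coe_NE, T0fun, Gf, G'f, mz, Rz]
    simp only [reflect_negS, reflect_reflect, coe_negS, inner_neg_left, inner_reflect_sub,
      neg_neg]
  -- Step 3: the difference is `-2` times the moment integrand
  have step3 : ∫ z, (G'f p q z - Lf p q z) ∂(mu3 n)
      = (-2 : ℝ) • ∫ z, Hf p q z ∂(mu3 n) := by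
    rw [← integral_smul]
    refine integral_congr_ae (Filter.Eventually.of_forall fun z => ?_)
    simp only [G'f, Lf, Hf, mz, Rz, coe_reflect]
    module
  -- Step 4: the right-hand side as an integral over the triple product
  have step4 : ∫ v, (∫ w,
          (∫ ν in {ν : Sph n | 0 < ⟪(ν : Eu n), (v : Eu n) - (w : Eu n)⟫},
            (⟪(v : Eu n), (ν : Eu n)⟫ * ⟪(ν : Eu n), (v : Eu n) - (w : Eu n)⟫ *
              (p v * q w)) • (ν : Eu n)
          ∂(sphereMeasure n)) ∂(sphereMeasure n)) ∂(sphereMeasure n)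
      = ∫ z, Hf p q z ∂(mu3 n) := by
    rw [integral_mu3_eq_triple (Hf p q) hH]
    refine integral_congr_ae (Filter.Eventually.of_forall fun v => ?_)
    dsimp only
    refine integral_congr_ae (Filter.Eventually.of_forall fun w => ?_)
    dsimp only
    have hmul : (fun ν : Sph n => (⟪(v : Eu n), (ν : Eu n)⟫ *
        ⟪(ν : Eu n), (v : Eu n) - (w : Eu n)⟫ * (p v * q w)) • (ν : Eu n))
        = fun ν : Sph n => ⟪(ν : Eu n), (v : Eu n) - (w : Eu n)⟫ •
            ((⟪(v : Eu n), (ν : Eu n)⟫ * (p v * q w)) • (ν : Eu n)) := by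
      funext ν; rw [smul_smul]; congr 1; ring
    rw [show (∫ ν in {ν : Sph n | 0 < ⟪(ν : Eu n), (v : Eu n) - (w : Eu n)⟫},
        (⟪(v : Eu n), (ν : Eu n)⟫ * ⟪(ν : Eu n), (v : Eu n) - (w : Eu n)⟫ *
          (p v * q w)) • (ν : Eu n) ∂(sphereMeasure n))
      = ∫ ν in {ν : Sph n | 0 < ⟪(ν : Eu n), (v : Eu n) - (w : Eu n)⟫},
          ⟪(ν : Eu n), (v : Eu n) - (w : Eu n)⟫ •
            ((⟪(v : Eu n), (ν : Eu n)⟫ * (p v * q w)) • (ν : Eu n))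
        ∂(sphereMeasure n) from by rw [hmul],
      setIntegral_pos_part v w]
    refine integral_congr_ae (Filter.Eventually.of_forall fun ν => ?_)
    dsimp only
    show (max ⟪(ν : Eu n), (v : Eu n) - (w : Eu n)⟫ 0) •
        ((⟪(v : Eu n), (ν : Eu n)⟫ * (p v * q w)) • (ν : Eu n)) = Hf p q (ν, (v, w))
    simp only [Hf, mz, Rz]
    rw [smul_smul]; congr 1; ring
  have hmain : ∫ v, K v • (v : Eu n) ∂(sphereMeasure n)
      = (-2 : ℝ) • ∫ z, Hf p q z ∂(mu3 n) := by
    calc ∫ v, K v • (v : Eu n) ∂(sphereMeasure n)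
        = ∫ z, (Gf p q z - Lf p q z) ∂(mu3 n) := step1
      _ = (∫ z, Gf p q z ∂(mu3 n)) - ∫ z, Lf p q z ∂(mu3 n) := integral_sub hG hL
      _ = (∫ z, G'f p q z ∂(mu3 n)) - ∫ z, Lf p q z ∂(mu3 n) := by rw [step2]
      _ = ∫ z, (G'f p q z - Lf p q z) ∂(mu3 n) := (integral_sub hG' hL).symm
      _ = (-2 : ℝ) • ∫ z, Hf p q z ∂(mu3 n) := step3
  rw [hmain, step4]
end

section
/- Let u, a ∈ ℝ² with u ≠ 0, and let S¹ ⊂ ℝ² be the unit circle with arclength measure σ. Then ∫_{ { ν ∈ S¹ : ν·u > 0 } } (a·ν) (ν·u) ν dσ(ν) = (2/3) ( ‖u‖ a + (a·u) u/‖u‖ ) (an identity between vectors in ℝ²). -/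
open MeasureTheory Metric RealInnerProductSpace

open Real Set

/-- `ℝ²` as a Euclidean space. -/
abbrev Eu2 := EuclideanSpace ℝ (Fin 2)

/-- The unit circle `S¹ ⊂ ℝ²`. -/
abbrev Circ := Metric.sphere (0 : Eu2) 1

/-- The arclength (surface) measure `σ` on the unit circle `S¹ ⊂ ℝ²`. -/
noncomputable def circleMeasure : Measure Circ :=
  (volume : Measure Eu2).toSphere

instance : IsFiniteMeasure circleMeasure := by unfold circleMeasure; infer_instance

noncomputable def cvec (θ : ℝ) : Eu2 := WithLp.toLp 2 ![Real.cos θ, Real.sin θ]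

lemma cvec_mem (θ : ℝ) : cvec θ ∈ Circ := by
  simp [cvec, mem_sphere_zero_iff_norm, EuclideanSpace.norm_eq, Fin.sum_univ_two,
    Real.norm_eq_abs, sq_abs, Real.sin_sq_add_cos_sq]

noncomputable def cpt (θ : ℝ) : Circ := ⟨cvec θ, cvec_mem θ⟩

open scoped Classical in
noncomputable def gext (g : Circ → Eu2) (x : Eu2) : Eu2 :=
  if h : x ∈ Circ then g ⟨x, h⟩ else 0

noncomputable def fwt : ℝ → ℝ := (Ioc (0:ℝ) 1).indicator (fun _ => 2)

noncomputable def T2 : Eu2 ≃ᵐ ℝ × ℝ :=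
  (MeasurableEquiv.toLp 2 (Fin 2 → ℝ)).symm.trans MeasurableEquiv.finTwoArrow

lemma kappa_eq : ∫ r in Ioi (0:ℝ), r * fwt r = 1 := by
  have h1 : ∀ r : ℝ, r * fwt r = (Ioc (0:ℝ) 1).indicator (fun r => r * 2) r := by
    intro r; simp only [fwt, Set.indicator]; split <;> simp
  simp_rw [h1]
  rw [setIntegral_indicator measurableSet_Ioc]
  have : Ioi (0:ℝ) ∩ Ioc 0 1 = Ioc 0 1 := by
    ext x; simp only [mem_inter_iff, mem_Ioi, mem_Ioc]; tauto
  rw [this, ← intervalIntegral.integral_of_le (by norm_num : (0:ℝ) ≤ 1),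
    intervalIntegral.integral_mul_const, integral_id]
  norm_num

lemma radial_integral_eq : (∫ r : Ioi (0:ℝ), fwt r ∂(Measure.volumeIoiPow 1)) = 1 := by
  rw [Measure.volumeIoiPow]
  simp only [ENNReal.ofReal]
  rw [integral_withDensity_eq_integral_smul
      (by exact (measurable_subtype_coe.pow_const 1).real_toNNReal)
      (fun r : Ioi (0:ℝ) => fwt r)]
  rw [integral_subtype_comap measurableSet_Ioi (fun r : ℝ => Real.toNNReal (r ^ 1) • fwt r)]
  rw [← kappa_eq]
  refine setIntegral_congr_fun measurableSet_Ioi fun r hr => ?_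
  rw [NNReal.smul_def, Real.coe_toNNReal _ (pow_nonneg (mem_Ioi.1 hr).le 1)]
  simp [smul_eq_mul]

theorem circle_integral_eq_interval (g : Circ → Eu2) :
    ∫ ν, g ν ∂circleMeasure = ∫ θ in Ioo (-π) π, g (cpt θ) := by
  have key1 :
      ∫ z : Circ × Ioi (0:ℝ), fwt z.2 • g z.1 ∂(circleMeasure.prod (Measure.volumeIoiPow 1))
        = (∫ r : Ioi (0:ℝ), fwt r ∂(Measure.volumeIoiPow 1)) • ∫ ν, g ν ∂circleMeasure := by
    rw [← MeasureTheory.integral_prod_swap]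
    exact integral_prod_smul (fun r : Ioi (0:ℝ) => fwt r) g
  have key2 :
      ∫ z : Circ × Ioi (0:ℝ), fwt z.2 • g z.1 ∂(circleMeasure.prod (Measure.volumeIoiPow 1))
        = ∫ x : Eu2, fwt ‖x‖ • gext g (‖x‖⁻¹ • x) := by
    have hfr : Module.finrank ℝ Eu2 = 2 := finrank_euclideanSpace_fin
    have h := (MeasureTheory.Measure.measurePreserving_homeomorphUnitSphereProd
        (volume : Measure Eu2)).integral_comp (Homeomorph.measurableEmbedding _)
        (fun z : Circ × Ioi (0:ℝ) => fwt z.2 • g z.1)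
    rw [hfr, show (2-1:ℕ)=1 from rfl] at h
    rw [circleMeasure]
    rw [← h]
    have heq : ∀ x : ({(0:Eu2)}ᶜ : Set Eu2),
        fwt ((homeomorphUnitSphereProd Eu2 x).2 : ℝ) • g (homeomorphUnitSphereProd Eu2 x).1
          = fwt ‖(x:Eu2)‖ • gext g (‖(x:Eu2)‖⁻¹ • (x:Eu2)) := by
      intro x
      have hx : (x : Eu2) ≠ 0 := x.2
      have hmem : ‖(x:Eu2)‖⁻¹ • (x:Eu2) ∈ Circ := by
        simp [mem_sphere_zero_iff_norm, norm_smul, norm_inv,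
          inv_mul_cancel₀ (norm_ne_zero_iff.2 hx)]
      rw [gext, dif_pos hmem]
      have e1 : ((homeomorphUnitSphereProd Eu2 x).2 : ℝ) = ‖(x:Eu2)‖ := by
        simp [homeomorphUnitSphereProd]
      have e2 : (homeomorphUnitSphereProd Eu2 x).1 = ⟨_, hmem⟩ :=
        Subtype.ext (by simp [homeomorphUnitSphereProd])
      rw [e1, e2]
    rw [integral_congr_ae (Filter.Eventually.of_forall heq)]
    rw [integral_subtype_comap (measurableSet_singleton (0:Eu2)).compl
        (fun x : Eu2 => fwt ‖x‖ • gext g (‖x‖⁻¹ • x)),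
      MeasureTheory.restrict_compl_singleton]
  have key3 :
      ∫ x : Eu2, fwt ‖x‖ • gext g (‖x‖⁻¹ • x)
        = ∫ p : ℝ × ℝ, fwt ‖(T2.symm p : Eu2)‖ • gext g (‖(T2.symm p : Eu2)‖⁻¹ • (T2.symm p : Eu2)) :=
    ((((EuclideanSpace.volume_preserving_symm_measurableEquiv_toLp (Fin 2)).trans
      (volume_preserving_finTwoArrow ℝ)).symm _).integral_comp
        (MeasurableEquiv.measurableEmbedding _)
        (fun x : Eu2 => fwt ‖x‖ • gext g (‖x‖⁻¹ • x))).symm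
  have key4 :
      ∫ p : ℝ × ℝ, fwt ‖(T2.symm p : Eu2)‖ • gext g (‖(T2.symm p : Eu2)‖⁻¹ • (T2.symm p : Eu2))
        = ∫ p in polarCoord.target,
            (p.1 * fwt p.1) • g (cpt p.2) := by
    rw [← integral_comp_polarCoord_symm
      (fun q : ℝ × ℝ => fwt ‖(T2.symm q : Eu2)‖ • gext g (‖(T2.symm q : Eu2)‖⁻¹ • (T2.symm q : Eu2)))]
    refine setIntegral_congr_fun polarCoord.open_target.measurableSet fun p hp => ?_
    rw [polarCoord_target] at hp
    obtain ⟨hr, hθ⟩ := hp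
    rw [Set.mem_Ioi] at hr
    have hps : polarCoord.symm p = (p.1 * Real.cos p.2, p.1 * Real.sin p.2) := rfl
    have hvec : (T2.symm (polarCoord.symm p) : Eu2) = p.1 • cvec p.2 := by
      rw [hps]
      have : (T2.symm (p.1 * Real.cos p.2, p.1 * Real.sin p.2) : Eu2)
          = WithLp.toLp 2 ![p.1 * Real.cos p.2, p.1 * Real.sin p.2] := rfl
      rw [this]
      ext i
      fin_cases i <;> simp [cvec]
    rw [hvec]
    have hnorm : ‖p.1 • cvec p.2‖ = p.1 := by
      rw [norm_smul, show ‖cvec p.2‖ = 1 from mem_sphere_zero_iff_norm.1 (cvec_mem p.2)]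
      simp [abs_of_pos hr]
    rw [hnorm]
    have hinv : p.1⁻¹ • p.1 • cvec p.2 = cvec p.2 := by
      rw [smul_smul, inv_mul_cancel₀ hr.ne', one_smul]
    rw [hinv, gext, dif_pos (cvec_mem p.2), smul_smul]
    rfl
  have key5 :
      (∫ p in polarCoord.target, (p.1 * fwt p.1) • g (cpt p.2))
        = (∫ r in Ioi (0:ℝ), r * fwt r) • ∫ θ in Ioo (-π) π, g (cpt θ) := by
    rw [polarCoord_target, Measure.volume_eq_prod, ← Measure.prod_restrict]
    exact integral_prod_smul (fun r : ℝ => r * fwt r) (fun θ : ℝ => g (cpt θ))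
  rw [radial_integral_eq, one_smul] at key1
  rw [kappa_eq, one_smul] at key5
  rw [← key1, key2, key3, key4, key5]

lemma inner_two (x y : Eu2) : ⟪x, y⟫ = x 0 * y 0 + x 1 * y 1 := by
  simp [PiLp.inner_apply, Fin.sum_univ_two, RCLike.inner_apply, starRingEnd_apply]; ring

lemma trig3 (A B C : ℝ) :
    ∫ φ in (-(π/2))..(π/2),
      (A * Real.cos φ ^ 3 + B * Real.cos φ ^ 2 * Real.sin φ + C * Real.cos φ * Real.sin φ ^ 2)
      = 4/3 * A + 2/3 * C := by
  have hcongr : ∀ φ : ℝ,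
      A * Real.cos φ ^ 3 + B * Real.cos φ ^ 2 * Real.sin φ + C * Real.cos φ * Real.sin φ ^ 2
      = A * (Real.cos φ - Real.sin φ ^ 2 * Real.cos φ) + B * (Real.cos φ ^ 2 * Real.sin φ)
        + C * (Real.sin φ ^ 2 * Real.cos φ) := by
    intro φ
    linear_combination (A * Real.cos φ) * (Real.sin_sq_add_cos_sq φ)
  have hderiv : ∀ φ : ℝ, HasDerivAt
      (fun φ => A * (Real.sin φ - Real.sin φ ^ 3 / 3) - B * (Real.cos φ ^ 3 / 3)
        + C * (Real.sin φ ^ 3 / 3))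
      (A * (Real.cos φ - Real.sin φ ^ 2 * Real.cos φ) + B * (Real.cos φ ^ 2 * Real.sin φ)
        + C * (Real.sin φ ^ 2 * Real.cos φ)) φ := by
    intro φ
    have hs := Real.hasDerivAt_sin φ
    have hc := Real.hasDerivAt_cos φ
    have hs3 : HasDerivAt (fun φ => Real.sin φ ^ 3) (3 * Real.sin φ ^ 2 * Real.cos φ) φ := by
      simpa using hs.fun_pow 3
    have hc3 : HasDerivAt (fun φ => Real.cos φ ^ 3) (3 * Real.cos φ ^ 2 * (-Real.sin φ)) φ := by
      simpa using hc.fun_pow 3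
    have := ((hs.fun_sub (hs3.div_const 3)).const_mul A |>.fun_sub ((hc3.div_const 3).const_mul B)).fun_add
      ((hs3.div_const 3).const_mul C)
    exact this.congr_deriv (by ring)
  simp_rw [hcongr]
  rw [intervalIntegral.integral_eq_sub_of_hasDerivAt (fun φ _ => hderiv φ)
    (by apply Continuous.intervalIntegrable; continuity)]
  simp [Real.sin_pi_div_two, Real.cos_pi_div_two]
  ring

lemma final_algebra (u a w w' : Eu2) (hn : (0:ℝ) < ‖u‖)
    (hnsq : u 0 ^ 2 + u 1 ^ 2 = ‖u‖ ^ 2)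
    (hw0 : w 0 = u 0 / ‖u‖) (hw1 : w 1 = u 1 / ‖u‖)
    (hw'0 : w' 0 = -(u 1 / ‖u‖)) (hw'1 : w' 1 = u 0 / ‖u‖) :
    (4/3 * (‖u‖ * (⟪a, u⟫ / ‖u‖))) • w
      + (2/3 * (‖u‖ * ((a 1 * u 0 - a 0 * u 1) / ‖u‖))) • w'
      = (2 / 3 : ℝ) • (‖u‖ • a + (⟪a, u⟫ / ‖u‖) • u) := by
  have hinner : ⟪a, u⟫ = a 0 * u 0 + a 1 * u 1 := inner_two a u
  have hne : ‖u‖ ≠ 0 := hn.ne'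
  ext i
  fin_cases i <;>
  · simp only [Fin.zero_eta, Fin.mk_one, Fin.isValue, PiLp.add_apply, PiLp.smul_apply,
      smul_eq_mul, hinner, hw0, hw1, hw'0, hw'1]
    field_simp
    first
    | linear_combination (2 * a 0) * hnsq
    | linear_combination (2 * a 1) * hnsq

set_option maxHeartbeats 1000000 in
/-- Vector-valued half-circle integral: for `u ≠ 0` and any `a ∈ ℝ²`,
`∫_{ν ∈ S¹ : ν·u > 0} (a·ν)(ν·u) ν dσ(ν) = (2/3)(‖u‖ a + (a·u) u/‖u‖)`. -/
theorem half_circle_vector_integral (u a : Eu2) (hu : u ≠ 0) :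
    ∫ ν in {ν : Circ | 0 < ⟪(ν : Eu2), u⟫},
        (⟪a, (ν : Eu2)⟫ * ⟪(ν : Eu2), u⟫) • (ν : Eu2) ∂circleMeasure
      = (2 / 3 : ℝ) • (‖u‖ • a + (⟪a, u⟫ / ‖u‖) • u) := by
  have hn : (0:ℝ) < ‖u‖ := norm_pos_iff.2 hu
  have hnsq : u 0 ^ 2 + u 1 ^ 2 = ‖u‖ ^ 2 := by
    rw [EuclideanSpace.norm_eq, Real.sq_sqrt (by positivity)]
    simp [Fin.sum_univ_two, Real.norm_eq_abs, sq_abs]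
  -- the angle of u
  set z : ℂ := ⟨u 0, u 1⟩ with hzdef
  have hz0 : z ≠ 0 := by
    intro h
    apply hu
    have h0 : u 0 = 0 := by simpa using congrArg Complex.re h
    have h1 : u 1 = 0 := by simpa using congrArg Complex.im h
    ext i; fin_cases i <;> simp [h0, h1]
  have habs : ‖z‖ = ‖u‖ := by
    rw [Complex.norm_def, Complex.normSq_mk,
      show u 0 * u 0 + u 1 * u 1 = ‖u‖^2 by nlinarith [hnsq]]
    exact Real.sqrt_sq hn.le
  set α : ℝ := Complex.arg z with hαdef
  have hcos : Real.cos α = u 0 / ‖u‖ := by rw [hαdef, Complex.cos_arg hz0, habs]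
  have hsin : Real.sin α = u 1 / ‖u‖ := by rw [hαdef, Complex.sin_arg, habs]
  -- auxiliary vectors and scalars
  set w : Eu2 := ‖u‖⁻¹ • u with hwdef
  set w' : Eu2 := WithLp.toLp 2 ![-(u 1 / ‖u‖), u 0 / ‖u‖] with hw'def
  set P : ℝ := ⟪a, u⟫ / ‖u‖ with hPdef
  set Q : ℝ := (a 1 * u 0 - a 0 * u 1) / ‖u‖ with hQdef
  -- basic component values
  have hw0 : w 0 = u 0 / ‖u‖ := by rw [hwdef]; simp [div_eq_inv_mul]
  have hw1 : w 1 = u 1 / ‖u‖ := by rw [hwdef]; simp [div_eq_inv_mul]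
  have hw'0 : w' 0 = -(u 1 / ‖u‖) := rfl
  have hw'1 : w' 1 = u 0 / ‖u‖ := rfl
  have hcvec0 : ∀ θ : ℝ, cvec θ 0 = Real.cos θ := fun θ => rfl
  have hcvec1 : ∀ θ : ℝ, cvec θ 1 = Real.sin θ := fun θ => rfl
  -- the three key pointwise identities
  have hc1 : ∀ φ : ℝ, ⟪cvec (φ + α), u⟫ = ‖u‖ * Real.cos φ := by
    intro φ
    rw [inner_two, hcvec0, hcvec1, Real.cos_add, Real.sin_add, hcos, hsin]
    field_simp
    linear_combination Real.cos φ * hnsq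
  have hc2 : ∀ φ : ℝ, ⟪a, cvec (φ + α)⟫ = Real.cos φ * P + Real.sin φ * Q := by
    intro φ
    rw [inner_two, hcvec0, hcvec1, Real.cos_add, Real.sin_add, hcos, hsin, hPdef, hQdef,
      inner_two]
    field_simp
    ring
  have hc3 : ∀ φ : ℝ, cvec (φ + α) = Real.cos φ • w + Real.sin φ • w' := by
    intro φ
    ext i
    fin_cases i
    · show cvec (φ + α) 0 = (Real.cos φ • w + Real.sin φ • w') 0
      rw [hcvec0, Real.cos_add, hcos, hsin]
      simp only [PiLp.add_apply, PiLp.smul_apply, smul_eq_mul, hw0, hw'0]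
      ring
    · show cvec (φ + α) 1 = (Real.cos φ • w + Real.sin φ • w') 1
      rw [hcvec1, Real.sin_add, hcos, hsin]
      simp only [PiLp.add_apply, PiLp.smul_apply, smul_eq_mul, hw1, hw'1]
      ring
  -- the function on the circle
  set S : Set Circ := {ν : Circ | 0 < ⟪(ν : Eu2), u⟫} with hSdef
  have hS : MeasurableSet S := by
    have hcont : Continuous fun ν : Circ => ⟪(ν : Eu2), u⟫ :=
      continuous_subtype_val.inner continuous_const
    exact measurableSet_lt measurable_const hcont.measurable
  set F : Circ → Eu2 := fun ν => (⟪a, (ν : Eu2)⟫ * ⟪(ν : Eu2), u⟫) • (ν : Eu2) with hFdef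
  set H : ℝ → Eu2 := fun θ =>
    if 0 < ⟪cvec θ, u⟫ then (⟪a, cvec θ⟫ * ⟪cvec θ, u⟫) • cvec θ else 0 with hHdef
  have step1 : ∫ ν in S, F ν ∂circleMeasure = ∫ θ in Ioo (-π) π, H θ := by
    rw [← integral_indicator hS, circle_integral_eq_interval (S.indicator F)]
    refine setIntegral_congr_fun measurableSet_Ioo fun θ _ => ?_
    simp only [Set.indicator_apply, hHdef, hSdef, mem_setOf_eq, cpt, hFdef]
  -- reduce to interval integral
  have step2 : ∫ θ in Ioo (-π) π, H θ = ∫ θ in (-π)..π, H θ := by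
    rw [intervalIntegral.integral_of_le (by linarith [Real.pi_pos]),
      MeasureTheory.integral_Ioc_eq_integral_Ioo]
  -- periodicity and shift
  have hper : Function.Periodic H (2 * π) := by
    intro θ
    have hcv : cvec (θ + 2 * π) = cvec θ := by
      ext i
      fin_cases i
      · show cvec (θ + 2 * π) 0 = cvec θ 0
        rw [hcvec0, hcvec0, Real.cos_add_two_pi]
      · show cvec (θ + 2 * π) 1 = cvec θ 1
        rw [hcvec1, hcvec1, Real.sin_add_two_pi]
    simp only [hHdef, hcv]
  have step3 : ∫ θ in (-π)..π, H θ = ∫ φ in (-π)..π, H (φ + α) := by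
    have h1 := hper.intervalIntegral_add_eq (-π) (α - π)
    rw [show -π + 2*π = π by ring, show α - π + 2*π = π + α by ring] at h1
    have h2 := intervalIntegral.integral_comp_add_right (a := -π) (b := π) H α
    rw [show -π + α = α - π by ring] at h2
    rw [h1, ← h2]
  -- the shifted integrand
  set K : ℝ → Eu2 := fun φ =>
    ((‖u‖ * Real.cos φ) * (Real.cos φ * P + Real.sin φ * Q)) •
      (Real.cos φ • w + Real.sin φ • w') with hKdef
  have hshift : ∀ φ : ℝ, H (φ + α) = if 0 < Real.cos φ then K φ else 0 := by
    intro φ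
    simp only [hHdef]
    rw [hc1 φ, hc2 φ, hc3 φ]
    by_cases h : 0 < Real.cos φ
    · rw [if_pos (mul_pos hn h), if_pos h]
      simp only [hKdef]
      congr 1
      ring
    · rw [if_neg, if_neg h]
      intro hcontra
      exact h (by nlinarith)
  have hKcont : Continuous K := by
    rw [hKdef]; fun_prop
  set HH : ℝ → Eu2 := fun φ => if 0 < Real.cos φ then K φ else 0 with hHHdef
  have hHHind : HH = ({φ : ℝ | 0 < Real.cos φ}).indicator K := by
    funext φ
    simp only [hHHdef, Set.indicator_apply, mem_setOf_eq]
  have hmeas : MeasurableSet {φ : ℝ | 0 < Real.cos φ} :=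
    (isOpen_lt continuous_const Real.continuous_cos).measurableSet
  have hHHint : ∀ t₁ t₂ : ℝ, IntervalIntegrable HH volume t₁ t₂ := by
    intro t₁ t₂
    rw [hHHind, intervalIntegrable_iff]
    exact (hKcont.integrableOn_uIoc).indicator hmeas
  have step4 : ∫ φ in (-π)..π, H (φ + α) = ∫ φ in (-π)..π, HH φ := by
    refine intervalIntegral.integral_congr fun φ _ => ?_
    simp only [hshift φ, hHHdef]
  -- split the interval
  have hz1 : ∫ φ in (-π)..(-(π/2)), HH φ = 0 := by
    rw [intervalIntegral.integral_congr (g := fun _ => (0:Eu2)) ?_, intervalIntegral.integral_zero]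
    intro φ hφ
    rw [Set.uIcc_of_le (by linarith [Real.pi_pos])] at hφ
    have hcos0 : Real.cos φ ≤ 0 := by
      rw [← Real.cos_neg]
      exact Real.cos_nonpos_of_pi_div_two_le_of_le (by linarith [hφ.2])
        (by linarith [hφ.1, Real.pi_pos])
    simp only [hHHdef]
    exact if_neg (not_lt.2 hcos0)
  have hz2 : ∫ φ in (π/2)..π, HH φ = 0 := by
    rw [intervalIntegral.integral_congr (g := fun _ => (0:Eu2)) ?_, intervalIntegral.integral_zero]
    intro φ hφ
    rw [Set.uIcc_of_le (by linarith [Real.pi_pos])] at hφ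
    have hcos0 : Real.cos φ ≤ 0 :=
      Real.cos_nonpos_of_pi_div_two_le_of_le hφ.1 (by linarith [hφ.2, Real.pi_pos])
    simp only [hHHdef]
    exact if_neg (not_lt.2 hcos0)
  have hmid : ∫ φ in (-(π/2))..(π/2), HH φ = ∫ φ in (-(π/2))..(π/2), K φ := by
    refine intervalIntegral.integral_congr fun φ hφ => ?_
    rw [Set.uIcc_of_le (by linarith [Real.pi_pos])] at hφ
    simp only [hHHdef]
    by_cases h : 0 < Real.cos φ
    · rw [if_pos h]
    · rw [if_neg h]
      have hcos0 : Real.cos φ = 0 :=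
        le_antisymm (not_lt.1 h) (Real.cos_nonneg_of_mem_Icc ⟨hφ.1, hφ.2⟩)
      simp [hKdef, hcos0]
  have step5 : ∫ φ in (-π)..π, HH φ = ∫ φ in (-(π/2))..(π/2), K φ := by
    have hsplit2 := intervalIntegral.integral_add_adjacent_intervals
      (hHHint (-(π/2)) (π/2)) (hHHint (π/2) π)
    have hsplit1 := intervalIntegral.integral_add_adjacent_intervals
      (hHHint (-π) (-(π/2))) (hHHint (-(π/2)) π)
    rw [← hsplit1, hz1, ← hsplit2, hz2, hmid]
    simp
  -- compute the middle integral
  have hKexp : ∀ φ : ℝ,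
      K φ = (((‖u‖ * Real.cos φ) * (Real.cos φ * P + Real.sin φ * Q)) * Real.cos φ) • w
        + (((‖u‖ * Real.cos φ) * (Real.cos φ * P + Real.sin φ * Q)) * Real.sin φ) • w' := by
    intro φ
    simp only [hKdef, smul_add, smul_smul]
  have step6 : ∫ φ in (-(π/2))..(π/2), K φ
      = (4/3 * (‖u‖ * P)) • w + (2/3 * (‖u‖ * Q)) • w' := by
    simp_rw [hKexp]
    rw [intervalIntegral.integral_add
      (by apply Continuous.intervalIntegrable; fun_prop)
      (by apply Continuous.intervalIntegrable; fun_prop),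
      intervalIntegral.integral_smul_const, intervalIntegral.integral_smul_const]
    congr 2
    · have : ∀ φ : ℝ, ((‖u‖ * Real.cos φ) * (Real.cos φ * P + Real.sin φ * Q)) * Real.cos φ
          = (‖u‖ * P) * Real.cos φ ^ 3 + (‖u‖ * Q) * Real.cos φ ^ 2 * Real.sin φ
            + 0 * Real.cos φ * Real.sin φ ^ 2 := fun φ => by ring
      simp_rw [this]
      rw [trig3]
      ring
    · have : ∀ φ : ℝ, ((‖u‖ * Real.cos φ) * (Real.cos φ * P + Real.sin φ * Q)) * Real.sin φ
          = 0 * Real.cos φ ^ 3 + (‖u‖ * P) * Real.cos φ ^ 2 * Real.sin φ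
            + (‖u‖ * Q) * Real.cos φ * Real.sin φ ^ 2 := fun φ => by ring
      simp_rw [this]
      rw [trig3]
      ring
  -- final algebra
  have final : (4/3 * (‖u‖ * P)) • w + (2/3 * (‖u‖ * Q)) • w'
      = (2 / 3 : ℝ) • (‖u‖ • a + (⟪a, u⟫ / ‖u‖) • u) := by
    rw [hPdef, hQdef]
    exact final_algebra u a w w' hn hnsq hw0 hw1 hw'0 hw'1
  calc ∫ ν in S, F ν ∂circleMeasure
      = ∫ θ in Ioo (-π) π, H θ := step1
    _ = ∫ θ in (-π)..π, H θ := step2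
    _ = ∫ φ in (-π)..π, H (φ + α) := step3
    _ = ∫ φ in (-π)..π, HH φ := step4
    _ = ∫ φ in (-(π/2))..(π/2), K φ := step5
    _ = (4/3 * (‖u‖ * P)) • w + (2/3 * (‖u‖ * Q)) • w' := step6
    _ = (2 / 3 : ℝ) • (‖u‖ • a + (⟪a, u⟫ / ‖u‖) • u) := final
end
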